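/- Let (I_{i,j,k})_{(i,j,k)∈ℤ³} be a family of pairwise disjoint open subintervals of [0,1], disposed respecting the lexicographic order of ℤ³ (I_{i,j,k} lies to the left of I_{i',j',k'} if and only if (i,j,k) ≺ (i',j',k') lexicographically), whose union is dense in [0,1]. Then there exist unique orientation-preserving homeomorphisms e, d, f of [0,1] whose restriction to each I_{i,j,k} is the affine map onto I_{i+1,j,k}, I_{i,j+1,k}, and I_{i,j,k+ij} respectively, and the subgroup of Homeo₊([0,1]) generated by e, d, f is isomorphic to N₄. -/

import Mathlib

/-- A 4×4 integer matrix is lower unitriangular if it has `1`s on the diagonal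
and `0`s above the diagonal. -/
def IsUnitriLower (M : Matrix (Fin 4) (Fin 4) ℤ) : Prop :=
  (∀ i, M i i = 1) ∧ ∀ i j : Fin 4, i < j → M i j = 0

/-- `N₄`: the group of 4×4 lower triangular integer matrices with `1`s on the diagonal,
realized as a subgroup of the units of the matrix ring. -/
def N4 : Subgroup (Matrix (Fin 4) (Fin 4) ℤ)ˣ where
  carrier := {u | IsUnitriLower u.val}
  one_mem' := by
    refine ⟨fun i => ?_, fun i j hij => ?_⟩
    · simp [Matrix.one_apply_eq]
    · simp [Units.val_one, Matrix.one_apply_ne (ne_of_lt hij)]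
  mul_mem' := by
    rintro a b ⟨ha1, ha2⟩ ⟨hb1, hb2⟩
    refine ⟨fun i => ?_, fun i j hij => ?_⟩
    · have key : ∀ k : Fin 4, a.val i k * b.val k i = if k = i then 1 else 0 := by
        intro k
        rcases lt_trichotomy k i with h | h | h
        · rw [hb2 k i h, mul_zero, if_neg h.ne]
        · subst h
          rw [ha1, hb1, one_mul, if_pos rfl]
        · rw [ha2 i k h, zero_mul, if_neg h.ne']
      show (a.val * b.val) i i = 1
      rw [Matrix.mul_apply]
      simp [key]
    · show (a.val * b.val) i j = 0
      rw [Matrix.mul_apply]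
      refine Finset.sum_eq_zero fun k _ => ?_
      rcases lt_or_ge i k with h | h
      · rw [ha2 i k h, zero_mul]
      · rw [hb2 k j (lt_of_le_of_lt h hij), mul_zero]
  inv_mem' := by
    rintro x ⟨ha1, ha2⟩
    set A := x.val with hA
    set B := (x⁻¹).val with hB
    have hBA : B * A = 1 := by
      rw [hB, hA, ← Units.val_mul]
      simp
    have key : ∀ i j : Fin 4,
        B i 0 * A 0 j + B i 1 * A 1 j + B i 2 * A 2 j + B i 3 * A 3 j
          = if i = j then 1 else 0 := by
      intro i j
      have h : (B * A) i j = (1 : Matrix (Fin 4) (Fin 4) ℤ) i j := by rw [hBA]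
      rw [Matrix.mul_apply, Fin.sum_univ_four] at h
      rw [h, Matrix.one_apply]
    have b03 : B 0 3 = 0 := by
      have h := key 0 3
      rw [ha2 0 3 (by decide), ha2 1 3 (by decide), ha2 2 3 (by decide), ha1 3,
        if_neg (by decide)] at h
      simpa using h
    have b13 : B 1 3 = 0 := by
      have h := key 1 3
      rw [ha2 0 3 (by decide), ha2 1 3 (by decide), ha2 2 3 (by decide), ha1 3,
        if_neg (by decide)] at h
      simpa using h
    have b23 : B 2 3 = 0 := by
      have h := key 2 3
      rw [ha2 0 3 (by decide), ha2 1 3 (by decide), ha2 2 3 (by decide), ha1 3,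
        if_neg (by decide)] at h
      simpa using h
    have b33 : B 3 3 = 1 := by
      have h := key 3 3
      rw [ha2 0 3 (by decide), ha2 1 3 (by decide), ha2 2 3 (by decide), ha1 3,
        if_pos rfl] at h
      simpa using h
    have b02 : B 0 2 = 0 := by
      have h := key 0 2
      rw [ha2 0 2 (by decide), ha2 1 2 (by decide), ha1 2, b03, if_neg (by decide)] at h
      simpa using h
    have b12 : B 1 2 = 0 := by
      have h := key 1 2
      rw [ha2 0 2 (by decide), ha2 1 2 (by decide), ha1 2, b13, if_neg (by decide)] at h
      simpa using h
    have b22 : B 2 2 = 1 := by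
      have h := key 2 2
      rw [ha2 0 2 (by decide), ha2 1 2 (by decide), ha1 2, b23, if_pos rfl] at h
      simpa using h
    have b01 : B 0 1 = 0 := by
      have h := key 0 1
      rw [ha2 0 1 (by decide), ha1 1, b02, b03, if_neg (by decide)] at h
      simpa using h
    have b11 : B 1 1 = 1 := by
      have h := key 1 1
      rw [ha2 0 1 (by decide), ha1 1, b12, b13, if_pos rfl] at h
      simpa using h
    have b00 : B 0 0 = 1 := by
      have h := key 0 0
      rw [ha1 0, b01, b02, b03, if_pos rfl] at h
      simpa using h
    refine ⟨fun i => ?_, fun i j hij => ?_⟩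
    · fin_cases i
      · exact b00
      · exact b11
      · exact b22
      · exact b33
    · fin_cases i <;> fin_cases j <;>
        first
          | exact absurd hij (by decide)
          | exact b01
          | exact b02
          | exact b03
          | exact b12
          | exact b13
          | exact b23

/-- The (strict) lexicographic order on `ℤ³`. -/
def Lex3 (m m' : ℤ × ℤ × ℤ) : Prop :=
  m.1 < m'.1 ∨ (m.1 = m'.1 ∧ (m.2.1 < m'.2.1 ∨ (m.2.1 = m'.2.1 ∧ m.2.2 < m'.2.2)))

/-- The permutation `T` of `[0,1]` is an orientation-preserving homeomorphism whose
restriction to each interval `(u m, v m)` is the affine map onto `(u (σ m), v (σ m))`. -/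
def AffineOnPieces (u v : ℤ × ℤ × ℤ → ℝ) (σ : ℤ × ℤ × ℤ → ℤ × ℤ × ℤ)
    (T : Equiv.Perm unitInterval) : Prop :=
  (StrictMono fun x : unitInterval => (T x : ℝ)) ∧
  (Continuous fun x : unitInterval => (T x : ℝ)) ∧
  ∀ m : ℤ × ℤ × ℤ, ∀ x : unitInterval, (x : ℝ) ∈ Set.Ioo (u m) (v m) →
    (T x : ℝ) = u (σ m) + ((v (σ m) - u (σ m)) / (v m - u m)) * ((x : ℝ) - u m)

/-- The triple `(e, d, f)` of permutations of `[0,1]` is made of orientation-preserving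
homeomorphisms that are affine on each `I_{i,j,k} = (u(i,j,k), v(i,j,k))`, sending it onto
`I_{i+1,j,k}`, `I_{i,j+1,k}` and `I_{i,j,k+ij}` respectively. -/
def AffineTriple (u v : ℤ × ℤ × ℤ → ℝ)
    (T : Equiv.Perm unitInterval × Equiv.Perm unitInterval × Equiv.Perm unitInterval) :
    Prop :=
  AffineOnPieces u v (fun m => (m.1 + 1, m.2.1, m.2.2)) T.1 ∧
  AffineOnPieces u v (fun m => (m.1, m.2.1 + 1, m.2.2)) T.2.1 ∧
  AffineOnPieces u v (fun m => (m.1, m.2.1, m.2.2 + m.1 * m.2.1)) T.2.2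

namespace PA

def mkM (p q r s t w : ℤ) : Matrix (Fin 4) (Fin 4) ℤ :=
  !![1,0,0,0; p,1,0,0; q,r,1,0; s,t,w,1]

lemma mkM_mul (p q r s t w p' q' r' s' t' w' : ℤ) :
    mkM p q r s t w * mkM p' q' r' s' t' w' =
      mkM (p+p') (q+q'+r*p') (r+r') (s+s'+t*p'+w*q') (t+t'+w*r') (w+w') := by
  ext i j
  fin_cases i <;> fin_cases j <;>
    simp [mkM, Matrix.mul_apply, Fin.sum_univ_four] <;> ring

lemma mkM_one : mkM 0 0 0 0 0 0 = 1 := by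
  ext i j; fin_cases i <;> fin_cases j <;>
    simp [mkM, Matrix.one_apply, Matrix.vecHead, Matrix.vecTail]

def mkU (p q r s t w : ℤ) : (Matrix (Fin 4) (Fin 4) ℤ)ˣ where
  val := mkM p q r s t w
  inv := mkM (-p) (r*p-q) (-r) (t*p+w*q-w*r*p-s) (w*r-t) (-w)
  val_inv := by rw [mkM_mul, ← mkM_one]; ring_nf
  inv_val := by rw [mkM_mul, ← mkM_one]; ring_nf

lemma mkU_mem (p q r s t w : ℤ) : mkU p q r s t w ∈ N4 := by
  constructor
  · intro i; fin_cases i <;> rfl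
  · intro i j hij; fin_cases i <;> fin_cases j <;> first | rfl | exact absurd hij (by decide)

def n4mk (p q r s t w : ℤ) : N4 := ⟨mkU p q r s t w, mkU_mem p q r s t w⟩

lemma n4mk_mul (p q r s t w p' q' r' s' t' w' : ℤ) :
    n4mk p q r s t w * n4mk p' q' r' s' t' w' =
      n4mk (p+p') (q+q'+r*p') (r+r') (s+s'+t*p'+w*q') (t+t'+w*r') (w+w') :=
  Subtype.ext (Units.ext (mkM_mul _ _ _ _ _ _ _ _ _ _ _ _))

lemma n4mk_zero : n4mk 0 0 0 0 0 0 = 1 := Subtype.ext (Units.ext mkM_one)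

lemma n4mk_eta (g : N4) :
    g = n4mk (g.val.val 1 0) (g.val.val 2 0) (g.val.val 2 1) (g.val.val 3 0)
          (g.val.val 3 1) (g.val.val 3 2) := by
  obtain ⟨h1, h2⟩ := g.2
  refine Subtype.ext (Units.ext ?_)
  ext i j
  fin_cases i <;> fin_cases j <;>
    first
      | exact (h1 _)
      | exact (h2 _ _ (by decide))
      | rfl

/-- inverse of `n4mk` -/
lemma n4mk_inv (p q r s t w : ℤ) :
    (n4mk p q r s t w)⁻¹ = n4mk (-p) (r*p-q) (-r) (t*p+w*q-w*r*p-s) (w*r-t) (-w) := by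
  rw [eq_comm, eq_inv_iff_mul_eq_one, n4mk_mul, ← n4mk_zero]
  ring_nf

end PA
namespace PA

/-- the affine-polynomial permutation of ℤ³ -/
def permOf (a b α β γ δ : ℤ) : Equiv.Perm (ℤ × ℤ × ℤ) where
  toFun m := (m.1 + a, m.2.1 + b, m.2.2 + δ + α * m.1 + β * m.2.1 + γ * m.1 * m.2.1)
  invFun m := (m.1 - a, m.2.1 - b,
    m.2.2 - δ - α * (m.1 - a) - β * (m.2.1 - b) - γ * (m.1 - a) * (m.2.1 - b))
  left_inv := by rintro ⟨x, y, z⟩; refine Prod.ext ?_ (Prod.ext ?_ ?_) <;> dsimp <;> ring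
  right_inv := by rintro ⟨x, y, z⟩; refine Prod.ext ?_ (Prod.ext ?_ ?_) <;> dsimp <;> ring

lemma permOf_mul (a b α β γ δ a' b' α' β' γ' δ' : ℤ) :
    permOf a b α β γ δ * permOf a' b' α' β' γ' δ' =
      permOf (a+a') (b+b') (α+α'+γ*b') (β+β'+γ*a') (γ+γ')
        (δ+δ'+α*a'+β*b'+γ*a'*b') := by
  refine Equiv.ext ?_
  rintro ⟨x, y, z⟩
  show (permOf a b α β γ δ) ((permOf a' b' α' β' γ' δ') (x, y, z)) = _
  simp only [permOf, Equiv.coe_fn_mk]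
  refine Prod.ext ?_ (Prod.ext ?_ ?_) <;> dsimp <;> ring

lemma permOf_one : permOf 0 0 0 0 0 0 = 1 := by
  refine Equiv.ext ?_
  rintro ⟨x, y, z⟩
  simp [permOf]

/-- `permOf` preserves the lexicographic order. -/
lemma lex_permOf (a b α β γ δ : ℤ) (m m' : ℤ × ℤ × ℤ) :
    Lex3 m m' ↔ Lex3 (permOf a b α β γ δ m) (permOf a b α β γ δ m') := by
  obtain ⟨x, y, z⟩ := m; obtain ⟨x', y', z'⟩ := m'
  simp only [Lex3, permOf, Equiv.coe_fn_mk]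
  constructor
  · rintro (h | ⟨rfl, h | ⟨rfl, h⟩⟩)
    · exact Or.inl (by linarith)
    · exact Or.inr ⟨rfl, Or.inl (by linarith)⟩
    · exact Or.inr ⟨rfl, Or.inr ⟨rfl, by linarith⟩⟩
  · rintro (h | ⟨h1, h | ⟨h2, h⟩⟩)
    · exact Or.inl (by linarith)
    · exact Or.inr ⟨by linarith, Or.inl (by linarith)⟩
    · have hx : x = x' := by linarith
      have hy : y = y' := by linarith
      subst hx; subst hy
      exact Or.inr ⟨rfl, Or.inr ⟨rfl, by nlinarith⟩⟩

/-- the homomorphism from `N4` to permutations of `ℤ³`. -/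
def piE : N4 →* Equiv.Perm (ℤ × ℤ × ℤ) where
  toFun g := permOf (g.val.val 3 2) (g.val.val 1 0) (g.val.val 2 0)
      (g.val.val 2 1 * g.val.val 3 2 - g.val.val 3 1) (g.val.val 2 1)
      (g.val.val 2 0 * g.val.val 3 2 - g.val.val 3 0)
  map_one' := by
    rw [← n4mk_zero]
    show permOf 0 0 0 (0*0-0) 0 (0*0-0) = 1
    simpa using permOf_one
  map_mul' := by
    intro g h
    obtain ⟨p, q, r, s, t, w, rfl⟩ :
        ∃ p q r s t w, g = n4mk p q r s t w := ⟨_, _, _, _, _, _, n4mk_eta g⟩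
    obtain ⟨p', q', r', s', t', w', rfl⟩ :
        ∃ p q r s t w, h = n4mk p q r s t w := ⟨_, _, _, _, _, _, n4mk_eta h⟩
    rw [n4mk_mul]
    show permOf _ _ _ _ _ _ = permOf _ _ _ _ _ _ * permOf _ _ _ _ _ _
    rw [permOf_mul]
    have e0 : ∀ p q r s t w : ℤ, (n4mk p q r s t w).val.val 3 2 = w := fun _ _ _ _ _ _ => rfl
    have e1 : ∀ p q r s t w : ℤ, (n4mk p q r s t w).val.val 1 0 = p := fun _ _ _ _ _ _ => rfl
    have e2 : ∀ p q r s t w : ℤ, (n4mk p q r s t w).val.val 2 0 = q := fun _ _ _ _ _ _ => rfl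
    have e3 : ∀ p q r s t w : ℤ, (n4mk p q r s t w).val.val 2 1 = r := fun _ _ _ _ _ _ => rfl
    have e4 : ∀ p q r s t w : ℤ, (n4mk p q r s t w).val.val 3 1 = t := fun _ _ _ _ _ _ => rfl
    have e5 : ∀ p q r s t w : ℤ, (n4mk p q r s t w).val.val 3 0 = s := fun _ _ _ _ _ _ => rfl
    simp only [e0, e1, e2, e3, e4, e5]
    congr 1 <;> ring

lemma piE_injective : Function.Injective piE := by
  intro g h hgh
  obtain ⟨p, q, r, s, t, w, rfl⟩ :
      ∃ p q r s t w, g = n4mk p q r s t w := ⟨_, _, _, _, _, _, n4mk_eta g⟩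
  obtain ⟨p', q', r', s', t', w', rfl⟩ :
      ∃ p q r s t w, h = n4mk p q r s t w := ⟨_, _, _, _, _, _, n4mk_eta h⟩
  have key : ∀ x y z : ℤ,
      (x + w, y + p, z + (q*w - s) + q*x + (r*w - t)*y + r*x*y) =
      (x + w', y + p', z + (q'*w' - s') + q'*x + (r'*w' - t')*y + r'*x*y) := by
    intro x y z
    have h2 : (piE (n4mk p q r s t w)) (x, y, z) =
        (piE (n4mk p' q' r' s' t' w')) (x, y, z) := by rw [hgh]
    exact h2
  have h000 := key 0 0 0
  have h100 := key 1 0 0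
  have h010 := key 0 1 0
  have h110 := key 1 1 0
  simp only [Prod.mk.injEq] at h000 h100 h010 h110
  obtain ⟨hw, hp, h3⟩ := h000
  obtain ⟨-, -, h4⟩ := h100
  obtain ⟨-, -, h5⟩ := h010
  obtain ⟨-, -, h6⟩ := h110
  have hw' : w = w' := by linarith
  have hp' : p = p' := by linarith
  subst hw'; subst hp'
  have hq : q = q' := by linarith
  subst hq
  have hr : r = r' := by linarith
  subst hr
  have ht : t = t' := by linarith
  subst ht
  have hs : s = s' := by linarith
  subst hs
  rfl

end PA
namespace PA

/-- the three distinguished generators of `N4` -/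
def Me : N4 := n4mk 0 0 0 0 0 1
def Md : N4 := n4mk 1 0 0 0 0 0
def Mf : N4 := n4mk 0 0 1 0 0 0

lemma Me_inv : Me⁻¹ = n4mk 0 0 0 0 0 (-1) := by rw [Me, n4mk_inv]; norm_num
lemma Md_inv : Md⁻¹ = n4mk (-1) 0 0 0 0 0 := by rw [Md, n4mk_inv]; norm_num
lemma Mf_inv : Mf⁻¹ = n4mk 0 0 (-1) 0 0 0 := by rw [Mf, n4mk_inv]; norm_num

section
variable {K : Subgroup N4} (hMe : Me ∈ K) (hMd : Md ∈ K) (hMf : Mf ∈ K)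

include hMe in
lemma memW : ∀ k : ℤ, n4mk 0 0 0 0 0 k ∈ K := by
  intro k
  induction k using Int.induction_on with
  | zero => rw [n4mk_zero]; exact one_mem K
  | succ i ih =>
      have h : n4mk 0 0 0 0 0 ((i : ℤ) + 1) = n4mk 0 0 0 0 0 (i : ℤ) * Me := by
        rw [Me, n4mk_mul]; norm_num
      rw [h]; exact mul_mem ih hMe
  | pred i ih =>
      have h : n4mk 0 0 0 0 0 (-(i : ℤ) - 1) = n4mk 0 0 0 0 0 (-(i : ℤ)) * Me⁻¹ := by
        rw [Me_inv, n4mk_mul]; norm_num [sub_eq_add_neg]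
      rw [h]; exact mul_mem ih (inv_mem hMe)

include hMd in
lemma memD : ∀ k : ℤ, n4mk k 0 0 0 0 0 ∈ K := by
  intro k
  induction k using Int.induction_on with
  | zero => rw [n4mk_zero]; exact one_mem K
  | succ i ih =>
      have h : n4mk ((i : ℤ) + 1) 0 0 0 0 0 = n4mk (i : ℤ) 0 0 0 0 0 * Md := by
        rw [Md, n4mk_mul]; norm_num
      rw [h]; exact mul_mem ih hMd
  | pred i ih =>
      have h : n4mk (-(i : ℤ) - 1) 0 0 0 0 0 = n4mk (-(i : ℤ)) 0 0 0 0 0 * Md⁻¹ := by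
        rw [Md_inv, n4mk_mul]; norm_num [sub_eq_add_neg]
      rw [h]; exact mul_mem ih (inv_mem hMd)

include hMf in
lemma memR : ∀ k : ℤ, n4mk 0 0 k 0 0 0 ∈ K := by
  intro k
  induction k using Int.induction_on with
  | zero => rw [n4mk_zero]; exact one_mem K
  | succ i ih =>
      have h : n4mk 0 0 ((i : ℤ) + 1) 0 0 0 = n4mk 0 0 (i : ℤ) 0 0 0 * Mf := by
        rw [Mf, n4mk_mul]; norm_num
      rw [h]; exact mul_mem ih hMf
  | pred i ih =>
      have h : n4mk 0 0 (-(i : ℤ) - 1) 0 0 0 = n4mk 0 0 (-(i : ℤ)) 0 0 0 * Mf⁻¹ := by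
        rw [Mf_inv, n4mk_mul]; norm_num [sub_eq_add_neg]
      rw [h]; exact mul_mem ih (inv_mem hMf)

include hMd hMf in
lemma memG20 (k : ℤ) : n4mk 0 k 0 0 0 0 ∈ K := by
  have h : n4mk 0 k 0 0 0 0 =
      Mf * n4mk k 0 0 0 0 0 * Mf⁻¹ * n4mk (-k) 0 0 0 0 0 := by
    rw [Mf_inv, Mf, n4mk_mul, n4mk_mul, n4mk_mul]; norm_num
  rw [h]
  exact mul_mem (mul_mem (mul_mem hMf (memD hMd k)) (inv_mem hMf)) (memD hMd (-k))

include hMe hMf in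
lemma memG31 (k : ℤ) : n4mk 0 0 0 0 k 0 ∈ K := by
  have h : n4mk 0 0 0 0 k 0 =
      Me * n4mk 0 0 k 0 0 0 * Me⁻¹ * n4mk 0 0 (-k) 0 0 0 := by
    rw [Me_inv, Me, n4mk_mul, n4mk_mul, n4mk_mul]; norm_num
  rw [h]
  exact mul_mem (mul_mem (mul_mem hMe (memR hMf k)) (inv_mem hMe)) (memR hMf (-k))

include hMe hMd hMf in
lemma memG30 (k : ℤ) : n4mk 0 0 0 k 0 0 ∈ K := by
  have h : n4mk 0 0 0 k 0 0 =
      Me * n4mk 0 k 0 0 0 0 * Me⁻¹ * n4mk 0 (-k) 0 0 0 0 := by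
    rw [Me_inv, Me, n4mk_mul, n4mk_mul, n4mk_mul]; norm_num
  rw [h]
  exact mul_mem (mul_mem (mul_mem hMe (memG20 hMd hMf k)) (inv_mem hMe))
    (memG20 hMd hMf (-k))

include hMe hMd hMf in
lemma N4_gen' (g : N4) : g ∈ K := by
  obtain ⟨p, q, r, s, t, w, rfl⟩ :
      ∃ p q r s t w, g = n4mk p q r s t w := ⟨_, _, _, _, _, _, n4mk_eta g⟩
  have h : n4mk p q r s t w =
      n4mk p 0 0 0 0 0 * n4mk 0 0 r 0 0 0 * n4mk 0 0 0 0 0 w *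
        n4mk 0 q 0 0 0 0 * n4mk 0 0 0 0 t 0 * n4mk 0 0 0 (s - w * q) 0 0 := by
    rw [n4mk_mul, n4mk_mul, n4mk_mul, n4mk_mul, n4mk_mul]
    norm_num
  rw [h]
  exact mul_mem (mul_mem (mul_mem (mul_mem (mul_mem (memD hMd p) (memR hMf r))
    (memW hMe w)) (memG20 hMd hMf q)) (memG31 hMe hMf t)) (memG30 hMe hMd hMf (s - w*q))

end

lemma N4_gen (g : N4) : g ∈ Subgroup.closure {Me, Md, Mf} :=
  N4_gen' (Subgroup.subset_closure (by simp)) (Subgroup.subset_closure (by simp))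
    (Subgroup.subset_closure (by simp)) g

end PA
namespace PA
open Set

/-- bundled hypotheses -/
structure Good (u v : ℤ × ℤ × ℤ → ℝ) : Prop where
  hlt : ∀ m, u m < v m
  hsub : ∀ m, Set.Ioo (u m) (v m) ⊆ Set.Icc (0 : ℝ) 1
  hdisj : ∀ m m', m ≠ m' → Disjoint (Set.Ioo (u m) (v m)) (Set.Ioo (u m') (v m'))
  hlex : ∀ m m', Lex3 m m' ↔ v m ≤ u m'
  hdense : Set.Icc (0 : ℝ) 1 ⊆ closure (⋃ m, Set.Ioo (u m) (v m))

def LexPres (σ : Equiv.Perm (ℤ × ℤ × ℤ)) : Prop :=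
  ∀ m m', Lex3 m m' ↔ Lex3 (σ m) (σ m')

lemma LexPres.symm {σ : Equiv.Perm (ℤ × ℤ × ℤ)} (h : LexPres σ) : LexPres σ.symm := by
  intro m m'
  simpa using (h (σ.symm m) (σ.symm m')).symm

lemma lex_total {m m' : ℤ × ℤ × ℤ} (h : m ≠ m') : Lex3 m m' ∨ Lex3 m' m := by
  obtain ⟨x, y, z⟩ := m; obtain ⟨x', y', z'⟩ := m'
  simp only [Ne, Prod.mk.injEq, not_and] at h
  simp only [Lex3]
  omega

variable {u v : ℤ × ℤ × ℤ → ℝ}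

lemma Good.u_nonneg (H : Good u v) (m : ℤ × ℤ × ℤ) : 0 ≤ u m := by
  by_contra hneg
  push_neg at hneg
  rcases le_or_gt (v m) 0 with hv | hv
  · have h := (H.hsub m ⟨show u m < (u m + v m)/2 by linarith [H.hlt m],
      show (u m + v m)/2 < v m by linarith [H.hlt m]⟩).1
    linarith
  · have h := (H.hsub m ⟨show u m < u m / 2 by linarith,
      show u m / 2 < v m by linarith⟩).1
    linarith

lemma Good.v_le_one (H : Good u v) (m : ℤ × ℤ × ℤ) : v m ≤ 1 := by
  by_contra hgt
  push_neg at hgt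
  rcases le_or_gt 1 (u m) with hu | hu
  · have h := (H.hsub m ⟨show u m < (u m + v m)/2 by linarith [H.hlt m],
      show (u m + v m)/2 < v m by linarith [H.hlt m]⟩).2
    linarith
  · have h := (H.hsub m ⟨show u m < (1 + v m)/2 by linarith,
      show (1 + v m)/2 < v m by linarith⟩).2
    linarith

/-- the affine map from `I_m` to `I_{σ m}` -/
noncomputable def aff (u v : ℤ × ℤ × ℤ → ℝ) (σ : ℤ × ℤ × ℤ → ℤ × ℤ × ℤ) (m : ℤ × ℤ × ℤ) (t : ℝ) : ℝ :=
  u (σ m) + ((v (σ m) - u (σ m)) / (v m - u m)) * (t - u m)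

lemma Good.ratio_pos (H : Good u v) (σ : ℤ × ℤ × ℤ → ℤ × ℤ × ℤ) (m : ℤ × ℤ × ℤ) :
    0 < (v (σ m) - u (σ m)) / (v m - u m) :=
  div_pos (by linarith [H.hlt (σ m)]) (by linarith [H.hlt m])

lemma Good.aff_mono (H : Good u v) (σ : ℤ × ℤ × ℤ → ℤ × ℤ × ℤ) (m : ℤ × ℤ × ℤ)
    {t t' : ℝ} (h : t ≤ t') : aff u v σ m t ≤ aff u v σ m t' := by
  have := H.ratio_pos σ m
  unfold aff
  nlinarith

lemma Good.aff_v (H : Good u v) (σ : ℤ × ℤ × ℤ → ℤ × ℤ × ℤ) (m : ℤ × ℤ × ℤ) :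
    aff u v σ m (v m) = v (σ m) := by
  unfold aff
  have h : v m - u m ≠ 0 := by linarith [H.hlt m]
  field_simp
  ring

lemma Good.aff_le_v (H : Good u v) (σ : ℤ × ℤ × ℤ → ℤ × ℤ × ℤ) (m : ℤ × ℤ × ℤ)
    {t : ℝ} (h : t ≤ v m) : aff u v σ m t ≤ v (σ m) := by
  rw [← H.aff_v σ m]; exact H.aff_mono σ m h

lemma Good.aff_ge_u (H : Good u v) (σ : ℤ × ℤ × ℤ → ℤ × ℤ × ℤ) (m : ℤ × ℤ × ℤ)
    {t : ℝ} (h : u m ≤ t) : u (σ m) ≤ aff u v σ m t := by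
  have := H.ratio_pos σ m
  unfold aff
  nlinarith

lemma Good.aff_gt_u (H : Good u v) (σ : ℤ × ℤ × ℤ → ℤ × ℤ × ℤ) (m : ℤ × ℤ × ℤ)
    {t : ℝ} (h : u m < t) : u (σ m) < aff u v σ m t := by
  have := H.ratio_pos σ m
  unfold aff
  nlinarith

lemma Good.aff_mem_Ioo (H : Good u v) (σ : ℤ × ℤ × ℤ → ℤ × ℤ × ℤ) {m : ℤ × ℤ × ℤ}
    {t : ℝ} (h : t ∈ Ioo (u m) (v m)) : aff u v σ m t ∈ Ioo (u (σ m)) (v (σ m)) := by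
  constructor
  · exact H.aff_gt_u σ m h.1
  · have h2 : aff u v σ m t < aff u v σ m (v m) := by
      have := H.ratio_pos σ m
      unfold aff
      have h3 : t < v m := h.2
      nlinarith
    rw [H.aff_v σ m] at h2
    exact h2

lemma Good.aff_comp (H : Good u v) (σ τ : ℤ × ℤ × ℤ → ℤ × ℤ × ℤ) (m : ℤ × ℤ × ℤ) (t : ℝ) :
    aff u v σ (τ m) (aff u v τ m t) = aff u v (σ ∘ τ) m t := by
  unfold aff
  have h1 : v (τ m) - u (τ m) ≠ 0 := by linarith [H.hlt (τ m)]
  have h2 : v m - u m ≠ 0 := by linarith [H.hlt m]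
  simp only [Function.comp]
  field_simp
  ring

/-- the set whose supremum defines the map -/
def SS (u v : ℤ × ℤ × ℤ → ℝ) (σ : Equiv.Perm (ℤ × ℤ × ℤ)) (x : ℝ) : Set ℝ :=
  insert 0 {y | ∃ m t, u m < t ∧ t ≤ v m ∧ t ≤ x ∧ y = aff u v (⇑σ) m t}

noncomputable def hmap (u v : ℤ × ℤ × ℤ → ℝ) (σ : Equiv.Perm (ℤ × ℤ × ℤ)) (x : ℝ) : ℝ :=
  sSup (SS u v σ x)

lemma SS_nonempty (σ : Equiv.Perm (ℤ × ℤ × ℤ)) (x : ℝ) : (SS u v σ x).Nonempty :=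
  ⟨0, Or.inl rfl⟩

lemma Good.SS_bdd (H : Good u v) (σ : Equiv.Perm (ℤ × ℤ × ℤ)) (x : ℝ) :
    BddAbove (SS u v σ x) := by
  refine ⟨1, ?_⟩
  rintro y (rfl | ⟨m, t, h1, h2, h3, rfl⟩)
  · norm_num
  · exact le_trans (H.aff_le_v (⇑σ) m h2) (H.v_le_one (σ m))

lemma Good.hmap_nonneg (H : Good u v) (σ : Equiv.Perm (ℤ × ℤ × ℤ)) (x : ℝ) :
    0 ≤ hmap u v σ x :=
  le_csSup (H.SS_bdd σ x) (Or.inl rfl)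

lemma Good.hmap_le_one (H : Good u v) (σ : Equiv.Perm (ℤ × ℤ × ℤ)) (x : ℝ) :
    hmap u v σ x ≤ 1 := by
  refine csSup_le (SS_nonempty σ x) ?_
  rintro y (rfl | ⟨m, t, h1, h2, h3, rfl⟩)
  · norm_num
  · exact le_trans (H.aff_le_v (⇑σ) m h2) (H.v_le_one (σ m))

lemma Good.hmap_mem (H : Good u v) (σ : Equiv.Perm (ℤ × ℤ × ℤ)) (x : ℝ) :
    hmap u v σ x ∈ Icc (0:ℝ) 1 :=
  ⟨H.hmap_nonneg σ x, H.hmap_le_one σ x⟩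

lemma Good.hmap_mono (H : Good u v) (σ : Equiv.Perm (ℤ × ℤ × ℤ)) {x x' : ℝ} (h : x ≤ x') :
    hmap u v σ x ≤ hmap u v σ x' := by
  refine csSup_le_csSup (H.SS_bdd σ x') (SS_nonempty σ x) ?_
  rintro y (rfl | ⟨m, t, h1, h2, h3, rfl⟩)
  · exact Or.inl rfl
  · exact Or.inr ⟨m, t, h1, h2, le_trans h3 h, rfl⟩

lemma Good.hmap_Ioo (H : Good u v) {σ : Equiv.Perm (ℤ × ℤ × ℤ)} (hσ : LexPres σ)
    {m : ℤ × ℤ × ℤ} {x : ℝ} (hx : x ∈ Ioo (u m) (v m)) :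
    hmap u v σ x = aff u v (⇑σ) m x := by
  refine le_antisymm ?_ (le_csSup (H.SS_bdd σ x) (Or.inr ⟨m, x, hx.1, hx.2.le, le_refl x, rfl⟩))
  refine csSup_le (SS_nonempty σ x) ?_
  rintro y (rfl | ⟨m', t, h1, h2, h3, rfl⟩)
  · exact le_trans (H.u_nonneg (σ m)) (H.aff_ge_u (⇑σ) m hx.1.le)
  · by_cases hmm : m' = m
    · subst hmm
      exact H.aff_mono (⇑σ) m' h3
    · have hL : Lex3 m' m := by
        rcases lex_total hmm with hL | hL
        · exact hL
        · have := (H.hlex m m').mp hL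
          linarith [hx.2, h3, h1]
      have h4 : v (σ m') ≤ u (σ m) := (H.hlex (σ m') (σ m)).mp ((hσ m' m).mp hL)
      calc aff u v (⇑σ) m' t ≤ v (σ m') := H.aff_le_v (⇑σ) m' h2
        _ ≤ u (σ m) := h4
        _ ≤ aff u v (⇑σ) m x := H.aff_ge_u (⇑σ) m hx.1.le

lemma Good.aff_symm_apply (H : Good u v) (σ : Equiv.Perm (ℤ × ℤ × ℤ)) (n : ℤ × ℤ × ℤ)
    (y : ℝ) : aff u v (⇑σ) (σ.symm n) (aff u v (⇑σ.symm) n y) = y := by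
  rw [H.aff_comp (⇑σ) (⇑σ.symm) n y]
  unfold aff
  simp only [Function.comp, Equiv.apply_symm_apply]
  rw [div_self (by linarith [H.hlt n] : v n - u n ≠ 0)]
  ring

/-- the key two-sided inverse property -/
lemma Good.hmap_inverse (H : Good u v) {σ : Equiv.Perm (ℤ × ℤ × ℤ)} (hσ : LexPres σ)
    {y : ℝ} (hy : y ∈ Icc (0:ℝ) 1) : hmap u v σ (hmap u v σ.symm y) = y := by
  by_cases hex : ∃ n, y ∈ Ioo (u n) (v n)
  · obtain ⟨n, hn⟩ := hex
    have hx2 : hmap u v σ.symm y = aff u v (⇑σ.symm) n y := H.hmap_Ioo hσ.symm hn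
    have hx3 : hmap u v σ.symm y ∈ Ioo (u (σ.symm n)) (v (σ.symm n)) := by
      rw [hx2]; exact H.aff_mem_Ioo (⇑σ.symm) hn
    rw [H.hmap_Ioo hσ hx3, hx2, H.aff_symm_apply σ n y]
  · push_neg at hex
    refine le_antisymm ?_ ?_
    · refine csSup_le (SS_nonempty σ _) ?_
      rintro z (rfl | ⟨m, t, ht1, ht2, ht3, rfl⟩)
      · exact hy.1
      · by_contra hlt2
        push_neg at hlt2
        have h1 : y < v (σ m) := lt_of_lt_of_le hlt2 (H.aff_le_v (⇑σ) m ht2)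
        have h2 : y ≤ u (σ m) := by
          by_contra h3
          push_neg at h3
          exact hex (σ m) ⟨h3, h1⟩
        have hub : hmap u v σ.symm y ≤ u m := by
          refine csSup_le (SS_nonempty σ.symm y) ?_
          rintro z' (rfl | ⟨m', s, hs1, hs2, hs3, rfl⟩)
          · exact H.u_nonneg m
          · by_cases hmm : m' = σ m
            · subst hmm
              linarith
            · rcases lex_total hmm with hL | hL
              · have hL2 : Lex3 (σ.symm m') m := by
                  have := (hσ.symm m' (σ m)).mp hL
                  simpa using this
                have h4 : v (σ.symm m') ≤ u m := (H.hlex _ _).mp hL2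
                exact le_trans (H.aff_le_v (⇑σ.symm) m' hs2) h4
              · have := (H.hlex (σ m) m').mp hL
                linarith
        linarith
    · by_contra hlt2
      push_neg at hlt2
      have h0 : 0 ≤ hmap u v σ (hmap u v σ.symm y) := H.hmap_nonneg σ _
      set c := hmap u v σ (hmap u v σ.symm y) with hc
      have hz₀ : (c + y)/2 ∈ Icc (0:ℝ) 1 := ⟨by linarith, by linarith [hy.2]⟩
      obtain ⟨z, hzO, hzU⟩ := mem_closure_iff.mp (H.hdense hz₀) (Ioo c y) isOpen_Ioo
        ⟨by linarith, by linarith⟩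
      obtain ⟨n, hzn⟩ := mem_iUnion.mp hzU
      have hvn : v n ≤ y := by
        by_contra h4
        push_neg at h4
        exact hex n ⟨lt_trans hzn.1 hzO.2, h4⟩
      have hxn : v (σ.symm n) ≤ hmap u v σ.symm y :=
        le_csSup (H.SS_bdd σ.symm y)
          (Or.inr ⟨n, v n, H.hlt n, le_refl _, hvn, (H.aff_v (⇑σ.symm) n).symm⟩)
      have hfin : v n ≤ c := by
        rw [hc]
        refine le_csSup (H.SS_bdd σ _) (Or.inr ⟨σ.symm n, v (σ.symm n), H.hlt _, le_refl _,
          hxn, ?_⟩)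
        rw [H.aff_v (⇑σ) (σ.symm n), Equiv.apply_symm_apply]
      linarith [hzO.1, hzn.2]

end PA
namespace PA
open Set

variable {u v : ℤ × ℤ × ℤ → ℝ}

/-- the homeomorphism of the unit interval induced by a lex-preserving permutation -/
noncomputable def Tperm (H : Good u v) (σ : Equiv.Perm (ℤ × ℤ × ℤ)) (hσ : LexPres σ) :
    Equiv.Perm unitInterval where
  toFun x := ⟨hmap u v σ x, H.hmap_mem σ x⟩
  invFun y := ⟨hmap u v σ.symm y, H.hmap_mem σ.symm y⟩
  left_inv x := by
    refine Subtype.ext ?_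
    have h := H.hmap_inverse (σ := σ.symm) hσ.symm (y := (x : ℝ)) x.2
    rw [Equiv.symm_symm] at h
    exact h
  right_inv y := Subtype.ext (H.hmap_inverse hσ y.2)

lemma Tperm_strictMono (H : Good u v) (σ : Equiv.Perm (ℤ × ℤ × ℤ)) (hσ : LexPres σ) :
    StrictMono fun x : unitInterval => ((Tperm H σ hσ) x : ℝ) := by
  intro a b hab
  have h1 : hmap u v σ a ≤ hmap u v σ b := H.hmap_mono σ (Subtype.coe_lt_coe.mpr hab).le
  refine lt_of_le_of_ne h1 ?_
  intro he
  have h2 : (Tperm H σ hσ) a = (Tperm H σ hσ) b := Subtype.ext he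
  exact hab.ne ((Tperm H σ hσ).injective h2)

lemma Tperm_continuous (H : Good u v) (σ : Equiv.Perm (ℤ × ℤ × ℤ)) (hσ : LexPres σ) :
    Continuous fun x : unitInterval => ((Tperm H σ hσ) x : ℝ) := by
  have hsm : StrictMono (Tperm H σ hσ) := by
    intro a b hab
    exact Subtype.coe_lt_coe.mp (Tperm_strictMono H σ hσ hab)
  exact continuous_subtype_val.comp
    ((StrictMono.orderIsoOfSurjective _ hsm
      (Tperm H σ hσ).surjective).toHomeomorph.continuous)

lemma Tperm_affine (H : Good u v) (σ : Equiv.Perm (ℤ × ℤ × ℤ)) (hσ : LexPres σ) :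
    AffineOnPieces u v (⇑σ) (Tperm H σ hσ) :=
  ⟨Tperm_strictMono H σ hσ, Tperm_continuous H σ hσ,
    fun m x hx => H.hmap_Ioo hσ hx⟩

lemma affine_unique (H : Good u v) {s : ℤ × ℤ × ℤ → ℤ × ℤ × ℤ}
    {T T' : Equiv.Perm unitInterval} (h : AffineOnPieces u v s T)
    (h' : AffineOnPieces u v s T') : T = T' := by
  have hd : Dense {x : unitInterval | ∃ m, (x : ℝ) ∈ Ioo (u m) (v m)} := by
    intro x
    have himg : Subtype.val '' {x : unitInterval | ∃ m, (x : ℝ) ∈ Ioo (u m) (v m)} =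
        ⋃ m, Ioo (u m) (v m) := by
      ext z
      constructor
      · rintro ⟨x, ⟨m, hm⟩, rfl⟩
        exact mem_iUnion.mpr ⟨m, hm⟩
      · intro hz
        obtain ⟨m, hm⟩ := mem_iUnion.mp hz
        exact ⟨⟨z, H.hsub m hm⟩, ⟨m, hm⟩, rfl⟩
    rw [closure_subtype, himg]
    exact H.hdense x.2
  have heq : (fun x : unitInterval => ((T x : ℝ))) = fun x => ((T' x : ℝ)) := by
    refine Continuous.ext_on hd h.2.1 h'.2.1 ?_
    rintro x ⟨m, hm⟩
    show ((T x : ℝ)) = ((T' x : ℝ))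
    rw [h.2.2 m x hm, h'.2.2 m x hm]
  exact Equiv.ext fun x => Subtype.ext (congrFun heq x)

lemma affine_id (H : Good u v) : AffineOnPieces u v id 1 := by
  refine ⟨fun a b hab => Subtype.coe_lt_coe.mpr hab, continuous_subtype_val, ?_⟩
  intro m x hx
  show (x : ℝ) = u m + (v m - u m) / (v m - u m) * ((x : ℝ) - u m)
  rw [div_self (by linarith [H.hlt m] : v m - u m ≠ 0)]
  ring

lemma affine_mul (H : Good u v) {s s' : ℤ × ℤ × ℤ → ℤ × ℤ × ℤ}
    {T T' : Equiv.Perm unitInterval} (hT : AffineOnPieces u v s T)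
    (hT' : AffineOnPieces u v s' T') : AffineOnPieces u v (s ∘ s') (T * T') := by
  refine ⟨?_, ?_, ?_⟩
  · intro a b hab
    simp only [Equiv.Perm.mul_apply]
    exact hT.1 (Subtype.coe_lt_coe.mp (hT'.1 hab))
  · simp only [Equiv.Perm.mul_apply]
    exact hT.2.1.comp ((hT'.2.1).subtype_mk _)
  · intro m x hx
    have h1 := hT'.2.2 m x hx
    have h2 : ((T' x : ℝ)) ∈ Ioo (u (s' m)) (v (s' m)) := by
      rw [h1]
      exact H.aff_mem_Ioo s' hx
    have h3 := hT.2.2 (s' m) (T' x) h2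
    show ((T (T' x) : ℝ)) = aff u v (s ∘ s') m x
    rw [← H.aff_comp s s' m x]
    rw [h3, h1]
    rfl

end PA
namespace PA
open Set

lemma piE_Me : piE Me = permOf 1 0 0 0 0 0 := rfl
lemma piE_Md : piE Md = permOf 0 1 0 0 0 0 := rfl
lemma piE_Mf : piE Mf = permOf 0 0 0 0 1 0 := rfl

lemma coe_piE_Me : ⇑(piE Me) = fun m : ℤ × ℤ × ℤ => (m.1 + 1, m.2.1, m.2.2) := by
  rw [piE_Me]; funext m; simp [permOf]

lemma coe_piE_Md : ⇑(piE Md) = fun m : ℤ × ℤ × ℤ => (m.1, m.2.1 + 1, m.2.2) := by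
  rw [piE_Md]; funext m; simp [permOf]

lemma coe_piE_Mf : ⇑(piE Mf) = fun m : ℤ × ℤ × ℤ => (m.1, m.2.1, m.2.2 + m.1 * m.2.1) := by
  rw [piE_Mf]; funext m; simp [permOf]

lemma lexPres_piE (g : N4) : LexPres (piE g) :=
  lex_permOf (g.val.val 3 2) (g.val.val 1 0) (g.val.val 2 0)
    (g.val.val 2 1 * g.val.val 3 2 - g.val.val 3 1) (g.val.val 2 1)
    (g.val.val 2 0 * g.val.val 3 2 - g.val.val 3 0)

variable {u v : ℤ × ℤ × ℤ → ℝ}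

/-- the homomorphism from `N4` to homeomorphisms of the interval -/
noncomputable def Phi (H : Good u v) : N4 →* Equiv.Perm unitInterval where
  toFun g := Tperm H (piE g) (lexPres_piE g)
  map_one' := by
    refine affine_unique H (Tperm_affine H (piE (1 : N4)) (lexPres_piE 1)) ?_
    have h1 : ⇑(piE (1 : N4)) = id := by rw [map_one]; rfl
    rw [h1]
    exact affine_id H
  map_mul' g h := by
    refine affine_unique H (Tperm_affine H (piE (g * h)) (lexPres_piE (g * h))) ?_
    have h1 : ⇑(piE (g * h)) = ⇑(piE g) ∘ ⇑(piE h) := by rw [map_mul]; rfl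
    rw [h1]
    exact affine_mul H (Tperm_affine H (piE g) (lexPres_piE g))
      (Tperm_affine H (piE h) (lexPres_piE h))

lemma Phi_injective (H : Good u v) : Function.Injective (Phi H) := by
  refine (injective_iff_map_eq_one (Phi H)).mpr ?_
  intro g hg
  have hpi : piE g = 1 := by
    refine Equiv.ext fun m => ?_
    have hz : (u m + v m)/2 ∈ Ioo (u m) (v m) :=
      ⟨by linarith [H.hlt m], by linarith [H.hlt m]⟩
    have h1 : (((Phi H g) (⟨(u m + v m)/2, H.hsub m hz⟩ : unitInterval) : ℝ)) =
        aff u v (⇑(piE g)) m ((u m + v m)/2) :=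
      (Tperm_affine H (piE g) (lexPres_piE g)).2.2 m _ hz
    rw [hg] at h1
    have h2 : (u m + v m)/2 ∈ Ioo (u (piE g m)) (v (piE g m)) := by
      have h3 := H.aff_mem_Ioo (⇑(piE g)) hz
      rw [← h1] at h3
      exact h3
    by_contra hne
    exact Set.disjoint_left.mp (H.hdisj (piE g m) m hne) h2 hz
  exact piE_injective (by rw [hpi, map_one])

end PA


/-- **The piecewise affine action.** Given a family of pairwise disjoint open subintervals
`I_{i,j,k} = (u(i,j,k), v(i,j,k))` of `[0,1]`, disposed respecting the lexicographic order
of `ℤ³` and with dense union, there exist unique orientation-preserving homeomorphisms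
`e, d, f` of `[0,1]` whose restriction to each `I_{i,j,k}` is affine onto `I_{i+1,j,k}`,
`I_{i,j+1,k}`, `I_{i,j,k+ij}` respectively; the subgroup of `Homeo₊([0,1])` they generate
is isomorphic to `N₄`. -/
theorem affine_action_of_N4_on_unit_interval
    (u v : ℤ × ℤ × ℤ → ℝ)
    (hlt : ∀ m, u m < v m)
    (hsub : ∀ m, Set.Ioo (u m) (v m) ⊆ Set.Icc (0 : ℝ) 1)
    (hdisj : ∀ m m', m ≠ m' → Disjoint (Set.Ioo (u m) (v m)) (Set.Ioo (u m') (v m')))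
    (hlex : ∀ m m', Lex3 m m' ↔ v m ≤ u m')
    (hdense : Set.Icc (0 : ℝ) 1 ⊆ closure (⋃ m, Set.Ioo (u m) (v m))) :
    (∃! T : Equiv.Perm unitInterval × Equiv.Perm unitInterval × Equiv.Perm unitInterval,
        AffineTriple u v T) ∧
      ∀ T : Equiv.Perm unitInterval × Equiv.Perm unitInterval × Equiv.Perm unitInterval,
        AffineTriple u v T →
          Nonempty ((Subgroup.closure {T.1, T.2.1, T.2.2} :
            Subgroup (Equiv.Perm unitInterval)) ≃* N4) := by
  have H : PA.Good u v := ⟨hlt, hsub, hdisj, hlex, hdense⟩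
  constructor
  · refine ⟨(PA.Tperm H (PA.piE PA.Me) (PA.lexPres_piE PA.Me),
      PA.Tperm H (PA.piE PA.Md) (PA.lexPres_piE PA.Md),
      PA.Tperm H (PA.piE PA.Mf) (PA.lexPres_piE PA.Mf)), ⟨?_, ?_, ?_⟩, ?_⟩
    · exact PA.coe_piE_Me ▸ PA.Tperm_affine H (PA.piE PA.Me) (PA.lexPres_piE PA.Me)
    · exact PA.coe_piE_Md ▸ PA.Tperm_affine H (PA.piE PA.Md) (PA.lexPres_piE PA.Md)
    · exact PA.coe_piE_Mf ▸ PA.Tperm_affine H (PA.piE PA.Mf) (PA.lexPres_piE PA.Mf)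
    · rintro ⟨T1, T2, T3⟩ ⟨h1, h2, h3⟩
      obtain rfl : T1 = PA.Tperm H (PA.piE PA.Me) (PA.lexPres_piE PA.Me) :=
        PA.affine_unique H h1
          (PA.coe_piE_Me ▸ PA.Tperm_affine H (PA.piE PA.Me) (PA.lexPres_piE PA.Me))
      obtain rfl : T2 = PA.Tperm H (PA.piE PA.Md) (PA.lexPres_piE PA.Md) :=
        PA.affine_unique H h2
          (PA.coe_piE_Md ▸ PA.Tperm_affine H (PA.piE PA.Md) (PA.lexPres_piE PA.Md))
      obtain rfl : T3 = PA.Tperm H (PA.piE PA.Mf) (PA.lexPres_piE PA.Mf) :=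
        PA.affine_unique H h3
          (PA.coe_piE_Mf ▸ PA.Tperm_affine H (PA.piE PA.Mf) (PA.lexPres_piE PA.Mf))
      rfl
  · intro T hT
    have hT1 : T.1 = PA.Phi H PA.Me :=
      PA.affine_unique H hT.1
        (PA.coe_piE_Me ▸ PA.Tperm_affine H (PA.piE PA.Me) (PA.lexPres_piE PA.Me))
    have hT2 : T.2.1 = PA.Phi H PA.Md :=
      PA.affine_unique H hT.2.1
        (PA.coe_piE_Md ▸ PA.Tperm_affine H (PA.piE PA.Md) (PA.lexPres_piE PA.Md))
    have hT3 : T.2.2 = PA.Phi H PA.Mf :=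
      PA.affine_unique H hT.2.2
        (PA.coe_piE_Mf ▸ PA.Tperm_affine H (PA.piE PA.Mf) (PA.lexPres_piE PA.Mf))
    have hrange : (PA.Phi H).range = Subgroup.closure {T.1, T.2.1, T.2.2} := by
      rw [hT1, hT2, hT3]
      have h1 : ({PA.Phi H PA.Me, PA.Phi H PA.Md, PA.Phi H PA.Mf} :
          Set (Equiv.Perm unitInterval)) = ⇑(PA.Phi H) '' {PA.Me, PA.Md, PA.Mf} := by
        simp [Set.image_insert_eq]
      rw [h1, ← MonoidHom.map_closure]
      have h2 : Subgroup.closure {PA.Me, PA.Md, PA.Mf} = (⊤ : Subgroup N4) := by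
        rw [eq_top_iff]
        intro g _
        exact PA.N4_gen g
      rw [h2, ← MonoidHom.range_eq_map]
    exact ⟨(MulEquiv.subgroupCongr hrange.symm).trans
      (MonoidHom.ofInjective (PA.Phi_injective H)).symm⟩
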